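/- If the random variable Z with P(Z = n) = h_n is not almost surely equal to \kappa (i.e., h_{\kappa} < 1), then the order of vanishing of H(s) - s^{\kappa} at s = 1 (along the real interval [0,1]) is at most 2. -/
import Mathlib

open Filter Set Finset

noncomputable def Qf (n : ℕ) (s : ℝ) : ℝ := ∑ j ∈ Finset.range n, s ^ j
noncomputable def Pf (n : ℕ) (s : ℝ) : ℝ := ∑ j ∈ Finset.range n, Qf j s

lemma Qf_one (n : ℕ) : Qf n 1 = n := by simp [Qf]

lemma sum_range_cast (n : ℕ) : (∑ j ∈ Finset.range n, (j : ℝ)) = n * (n - 1) / 2 := by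
  induction n with
  | zero => simp
  | succ m ih => rw [Finset.sum_range_succ, ih]; push_cast; ring

lemma Pf_one (n : ℕ) : Pf n 1 = n * (n - 1) / 2 := by
  simp only [Pf, Qf_one]; exact sum_range_cast n

lemma Qf_cont (n : ℕ) : Continuous (Qf n) := by
  unfold Qf; exact continuous_finset_sum _ (fun i _ => continuous_pow i)

lemma Pf_cont (n : ℕ) : Continuous (Pf n) := by
  unfold Pf; exact continuous_finset_sum _ (fun i _ => Qf_cont i)

lemma mul_Qf (n : ℕ) (s : ℝ) : (s - 1) * Qf n s = s ^ n - 1 := by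
  rw [Qf, mul_comm]; exact geom_sum_mul s n

lemma mul_Pf (n : ℕ) (s : ℝ) : (s - 1) * Pf n s = Qf n s - n := by
  rw [Pf, Finset.mul_sum]
  simp only [mul_Qf]
  rw [Finset.sum_sub_distrib]
  simp [Qf]

lemma pow_expand (n : ℕ) (s : ℝ) :
    s ^ n = 1 + n * (s - 1) + (s - 1) ^ 2 * Pf n s := by
  linear_combination (1 - s) * mul_Pf n s - mul_Qf n s

lemma Qf_nonneg (n : ℕ) {s : ℝ} (hs : 0 ≤ s) : 0 ≤ Qf n s :=
  Finset.sum_nonneg fun i _ => pow_nonneg hs i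

lemma Qf_le_n (n : ℕ) {s : ℝ} (hs : 0 ≤ s) (hs1 : s ≤ 1) : Qf n s ≤ n := by
  calc Qf n s ≤ ∑ j ∈ Finset.range n, (1:ℝ) :=
        Finset.sum_le_sum fun i _ => pow_le_one₀ hs hs1
    _ = n := by simp

lemma Qf_le_inv (n : ℕ) {s : ℝ} (hs : 0 ≤ s) (hs1 : s < 1) : Qf n s ≤ (1 - s)⁻¹ := by
  have h1 : 0 < 1 - s := by linarith
  have h2 : (1 - s) * Qf n s = 1 - s ^ n := by
    have := mul_Qf n s; linarith
  have h3 : s ^ n ≥ 0 := pow_nonneg hs n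
  rw [inv_eq_one_div, le_div_iff₀ h1]
  nlinarith

lemma Pf_nonneg (n : ℕ) {s : ℝ} (hs : 0 ≤ s) : 0 ≤ Pf n s :=
  Finset.sum_nonneg fun i _ => Qf_nonneg i hs

lemma Pf_le (n : ℕ) {s : ℝ} (hs : 0 ≤ s) (hs1 : s < 1) : Pf n s ≤ n * (1 - s)⁻¹ := by
  calc Pf n s ≤ ∑ j ∈ Finset.range n, (1 - s)⁻¹ :=
        Finset.sum_le_sum fun i _ => Qf_le_inv i hs hs1
    _ = n * (1 - s)⁻¹ := by simp [mul_comm]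

theorem stmt_8 (h : ℕ → ℝ) (hnn : ∀ k, 0 ≤ h k) (hsum : HasSum h 1)
    (h0 : 0 < h 0) (κ : ℕ) (hκ : 1 ≤ κ) (hκ1 : h κ < 1)
    (H : ℝ → ℝ) (hH : ∀ s : ℝ, H s = ∑' n : ℕ, h n * s ^ n)
    (r : ℕ)
    (hvan : ∀ k < r, Filter.Tendsto (fun s : ℝ => (H s - s ^ κ) / (s - 1) ^ k)
      (nhdsWithin 1 (Set.Ico (0 : ℝ) 1)) (nhds 0))
    (hlim : ∃ L : ℝ, L ≠ 0 ∧ Filter.Tendsto (fun s : ℝ => (H s - s ^ κ) / (s - 1) ^ r)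
      (nhdsWithin 1 (Set.Ico (0 : ℝ) 1)) (nhds L)) :
    r ≤ 2 := by
  by_contra hr
  push_neg at hr
  have hsumm : Summable h := hsum.summable
  have htsum : ∑' n, h n = 1 := hsum.tsum_eq
  set F := nhdsWithin (1:ℝ) (Set.Ico (0:ℝ) 1) with hF
  haveI hFne : F.NeBot := by
    rw [hF]
    refine mem_closure_iff_nhdsWithin_neBot.mp ?_
    rw [closure_Ico (by norm_num : (0:ℝ) ≠ 1)]
    exact ⟨by norm_num, le_refl 1⟩
  have hmem : ∀ᶠ s in F, s ∈ Set.Ico (0:ℝ) 1 := self_mem_nhdsWithin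
  -- summability for fixed s
  have hssum : ∀ s ∈ Set.Ico (0:ℝ) 1, Summable (fun n => h n * s ^ n) := by
    intro s hs
    refine Summable.of_nonneg_of_le
      (fun n => mul_nonneg (hnn n) (pow_nonneg hs.1 n)) (fun n => ?_) hsumm
    nth_rewrite 2 [← mul_one (h n)]
    exact mul_le_mul_of_nonneg_left (pow_le_one₀ hs.1 hs.2.le) (hnn n)
  have hQsum : ∀ s ∈ Set.Ico (0:ℝ) 1, Summable (fun n => h n * Qf n s) := by
    intro s hs
    refine Summable.of_nonneg_of_le
      (fun n => mul_nonneg (hnn n) (Qf_nonneg n hs.1)) (fun n => ?_)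
      (hsumm.mul_right (1-s)⁻¹)
    exact mul_le_mul_of_nonneg_left (Qf_le_inv n hs.1 hs.2) (hnn n)
  -- Identity A
  have hidA : ∀ s ∈ Set.Ico (0:ℝ) 1,
      (H s - s ^ κ) / (s - 1) ^ 1 = (∑' n, h n * Qf n s) - Qf κ s := by
    intro s hs
    have hne : s - 1 ≠ 0 := sub_ne_zero.mpr (ne_of_lt hs.2)
    rw [pow_one, div_eq_iff hne]
    have e1 : ((∑' n, h n * Qf n s) - Qf κ s) * (s - 1)
        = (∑' n, (h n * Qf n s) * (s-1)) - (s^κ - 1) := by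
      rw [tsum_mul_right, ← mul_Qf κ s]; ring
    rw [e1]
    have e2 : ∀ n, (h n * Qf n s) * (s - 1) = h n * s ^ n - h n := by
      intro n; linear_combination h n * (mul_Qf n s)
    rw [tsum_congr e2, Summable.tsum_sub (hssum s hs) hsumm, htsum, ← hH s]
    ring
  have hv1 := hvan 1 (by omega)
  have hA0 : Tendsto (fun s => (∑' n, h n * Qf n s) - Qf κ s) F (nhds 0) :=
    Filter.Tendsto.congr' (hmem.mono fun s hs => hidA s hs) hv1
  have hQκt : Tendsto (fun s => Qf κ s) F (nhds (κ:ℝ)) := by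
    have := (Qf_cont κ).tendsto 1
    rw [Qf_one] at this
    exact this.mono_left nhdsWithin_le_nhds
  have hAt : Tendsto (fun s => ∑' n, h n * Qf n s) F (nhds (κ:ℝ)) := by
    have := hA0.add hQκt
    rw [zero_add] at this
    exact this.congr (fun s => by ring)
  -- partial sums of n * h n bounded by κ
  have hpart : ∀ m : ℕ, (∑ n ∈ Finset.range m, h n * (n:ℝ)) ≤ κ := by
    intro m
    have hle : ∀ᶠ s in F, (∑ n ∈ Finset.range m, h n * Qf n s) ≤ ∑' n, h n * Qf n s := by
      filter_upwards [hmem] with s hs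
      exact Summable.sum_le_tsum (Finset.range m)
        (fun n _ => mul_nonneg (hnn n) (Qf_nonneg n hs.1)) (hQsum s hs)
    have hcont : Tendsto (fun s => ∑ n ∈ Finset.range m, h n * Qf n s) F
        (nhds (∑ n ∈ Finset.range m, h n * (n:ℝ))) := by
      have hc : Continuous fun s : ℝ => ∑ n ∈ Finset.range m, h n * Qf n s :=
        continuous_finset_sum _ (fun i _ => continuous_const.mul (Qf_cont i))
      have := hc.tendsto 1
      simp only [Qf_one] at this
      exact this.mono_left nhdsWithin_le_nhds
    exact le_of_tendsto_of_tendsto hcont hAt hle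
  have hgnn : ∀ n, 0 ≤ h n * (n:ℝ) := fun n => mul_nonneg (hnn n) (Nat.cast_nonneg n)
  have hgsum : Summable (fun n => h n * (n:ℝ)) := summable_of_sum_range_le hgnn hpart
  have hgle : ∑' n, h n * (n:ℝ) ≤ κ := Summable.tsum_le_of_sum_range_le hgsum hpart
  have hge : (κ:ℝ) ≤ ∑' n, h n * (n:ℝ) := by
    refine le_of_tendsto hAt ?_
    filter_upwards [hmem] with s hs
    exact Summable.tsum_le_tsum
      (fun n => mul_le_mul_of_nonneg_left (Qf_le_n n hs.1 hs.2.le) (hnn n))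
      (hQsum s hs) hgsum
  have hgHas : HasSum (fun n => h n * (n:ℝ)) (κ:ℝ) := by
    have : ∑' n, h n * (n:ℝ) = κ := le_antisymm hgle hge
    exact this ▸ hgsum.hasSum
  -- P summability
  have hPsum : ∀ s ∈ Set.Ico (0:ℝ) 1, Summable (fun n => h n * Pf n s) := by
    intro s hs
    refine Summable.of_nonneg_of_le
      (fun n => mul_nonneg (hnn n) (Pf_nonneg n hs.1)) (fun n => ?_)
      (hgsum.mul_right (1-s)⁻¹)
    calc h n * Pf n s ≤ h n * ((n:ℝ) * (1-s)⁻¹) :=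
          mul_le_mul_of_nonneg_left (Pf_le n hs.1 hs.2) (hnn n)
      _ = h n * (n:ℝ) * (1-s)⁻¹ := by ring
  -- Identity B
  have hidB : ∀ s ∈ Set.Ico (0:ℝ) 1,
      (H s - s ^ κ) / (s - 1) ^ 2 = (∑' n, h n * Pf n s) - Pf κ s := by
    intro s hs
    have hne : s - 1 ≠ 0 := sub_ne_zero.mpr (ne_of_lt hs.2)
    rw [div_eq_iff (pow_ne_zero 2 hne)]
    have hsplit : HasSum (fun n => h n + (s-1) * (h n * (n:ℝ)) + (s-1)^2 * (h n * Pf n s))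
        (1 + (s-1) * κ + (s-1)^2 * ∑' n, h n * Pf n s) :=
      (hsum.add (hgHas.mul_left (s-1))).add (((hPsum s hs).hasSum).mul_left ((s-1)^2))
    have heq : (fun n => h n + (s-1) * (h n * (n:ℝ)) + (s-1)^2 * (h n * Pf n s))
        = fun n => h n * s ^ n := by
      funext n
      linear_combination (-(h n)) * (pow_expand n s)
    rw [heq] at hsplit
    have hHs : H s = 1 + (s-1) * κ + (s-1)^2 * ∑' n, h n * Pf n s := by
      rw [hH s]; exact hsplit.tsum_eq
    rw [hHs, pow_expand κ s]
    ring
  have hv2 := hvan 2 hr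
  have hB0 : Tendsto (fun s => (∑' n, h n * Pf n s) - Pf κ s) F (nhds 0) :=
    Filter.Tendsto.congr' (hmem.mono fun s hs => hidB s hs) hv2
  have hPκt : Tendsto (fun s => Pf κ s) F (nhds ((κ:ℝ) * ((κ:ℝ) - 1) / 2)) := by
    have := (Pf_cont κ).tendsto 1
    rw [Pf_one] at this
    exact this.mono_left nhdsWithin_le_nhds
  have hBt : Tendsto (fun s => ∑' n, h n * Pf n s) F (nhds ((κ:ℝ) * ((κ:ℝ) - 1) / 2)) := by
    have := hB0.add hPκt
    rw [zero_add] at this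
    exact this.congr (fun s => by ring)
  have hPone_nn : ∀ n : ℕ, 0 ≤ (n:ℝ) * ((n:ℝ) - 1) / 2 := by
    intro n
    rcases Nat.eq_zero_or_pos n with h0' | h1'
    · simp [h0']
    · have : (1:ℝ) ≤ (n:ℝ) := by exact_mod_cast h1'
      nlinarith
  have hpart2 : ∀ m : ℕ,
      (∑ n ∈ Finset.range m, h n * ((n:ℝ) * ((n:ℝ) - 1) / 2)) ≤ (κ:ℝ) * ((κ:ℝ) - 1) / 2 := by
    intro m
    have hle : ∀ᶠ s in F, (∑ n ∈ Finset.range m, h n * Pf n s) ≤ ∑' n, h n * Pf n s := by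
      filter_upwards [hmem] with s hs
      exact Summable.sum_le_tsum (Finset.range m)
        (fun n _ => mul_nonneg (hnn n) (Pf_nonneg n hs.1)) (hPsum s hs)
    have hcont : Tendsto (fun s => ∑ n ∈ Finset.range m, h n * Pf n s) F
        (nhds (∑ n ∈ Finset.range m, h n * ((n:ℝ) * ((n:ℝ) - 1) / 2))) := by
      have hc : Continuous fun s : ℝ => ∑ n ∈ Finset.range m, h n * Pf n s :=
        continuous_finset_sum _ (fun i _ => continuous_const.mul (Pf_cont i))
      have := hc.tendsto 1
      simp only [Pf_one] at this
      exact this.mono_left nhdsWithin_le_nhds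
    exact le_of_tendsto_of_tendsto hcont hBt hle
  have hunn : ∀ n, 0 ≤ h n * ((n:ℝ) * ((n:ℝ) - 1) / 2) :=
    fun n => mul_nonneg (hnn n) (hPone_nn n)
  have husum : Summable (fun n => h n * ((n:ℝ) * ((n:ℝ) - 1) / 2)) :=
    summable_of_sum_range_le hunn hpart2
  have hule : ∑' n, h n * ((n:ℝ) * ((n:ℝ) - 1) / 2) ≤ (κ:ℝ) * ((κ:ℝ) - 1) / 2 :=
    Summable.tsum_le_of_sum_range_le husum hpart2
  -- final contradiction
  have hcomb : HasSum (fun n => h n * ((n:ℝ) - (κ:ℝ))^2)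
      (2 * (∑' n, h n * ((n:ℝ) * ((n:ℝ) - 1) / 2)) + (1 - 2*(κ:ℝ)) * (κ:ℝ) + (κ:ℝ)^2 * 1) := by
    have := ((husum.hasSum.mul_left 2).add (hgHas.mul_left (1 - 2*(κ:ℝ)))).add
      (hsum.mul_left ((κ:ℝ)^2))
    have heq : (fun n => 2 * (h n * ((n:ℝ) * ((n:ℝ) - 1) / 2))
        + (1 - 2*(κ:ℝ)) * (h n * (n:ℝ)) + (κ:ℝ)^2 * h n)
        = fun n => h n * ((n:ℝ) - (κ:ℝ))^2 := by
      funext n; ring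
    rwa [heq] at this
  have hwnn : ∀ n, 0 ≤ h n * ((n:ℝ) - (κ:ℝ))^2 :=
    fun n => mul_nonneg (hnn n) (sq_nonneg _)
  have h0le : h 0 * ((0:ℝ) - (κ:ℝ))^2 ≤ ∑' n, h n * ((n:ℝ) - (κ:ℝ))^2 := by
    have := Summable.le_tsum hcomb.summable 0 (fun n _ => hwnn n)
    simpa using this
  have hκpos : (1:ℝ) ≤ (κ:ℝ) := by exact_mod_cast hκ
  have h0pos : 0 < h 0 * ((0:ℝ) - (κ:ℝ))^2 := by
    have hsq : (1:ℝ) ≤ ((0:ℝ) - (κ:ℝ))^2 := by nlinarith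
    nlinarith
  have htot := hcomb.tsum_eq
  rw [htot] at h0le
  nlinarith
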